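/- For every integer n ≥ 1 and every integer k with 0 ≤ k ≤ n, the binomial coefficient satisfies C(n,k)·2^(−n) ≤ Γ(n/2 + 1/2) / (Γ(n/2 + 1)·√π), where Γ denotes the real Gamma function. -/

import Mathlib

lemma gamma_sq_mid_le (a b : ℝ) (ha : 0 < a) (hb : 0 < b) :
    Real.Gamma ((a + b) / 2) ^ 2 ≤ Real.Gamma a * Real.Gamma b := by
  have h := Real.Gamma_mul_add_mul_le_rpow_Gamma_mul_rpow_Gamma ha hb
    (by norm_num : (0:ℝ) < 1/2) (by norm_num : (0:ℝ) < 1/2) (by norm_num)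
  have ha' := Real.Gamma_pos_of_pos ha
  have hb' := Real.Gamma_pos_of_pos hb
  have hmid : (1/2 : ℝ) * a + (1/2 : ℝ) * b = (a + b) / 2 := by ring
  rw [hmid] at h
  have h2 : Real.Gamma ((a + b) / 2) ^ 2 ≤
      (Real.Gamma a ^ ((1:ℝ)/2) * Real.Gamma b ^ ((1:ℝ)/2)) ^ 2 :=
    pow_le_pow_left₀ (Real.Gamma_pos_of_pos (by linarith)).le h 2
  refine h2.trans_eq ?_
  rw [mul_pow, ← Real.rpow_natCast (Real.Gamma a ^ ((1:ℝ)/2)) 2,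
    ← Real.rpow_natCast (Real.Gamma b ^ ((1:ℝ)/2)) 2,
    ← Real.rpow_mul ha'.le, ← Real.rpow_mul hb'.le]
  norm_num

/-- For `n ≥ 1` and `0 ≤ k ≤ n`,
`C(n,k)·2^(−n) ≤ Γ(n/2 + 1/2) / (Γ(n/2 + 1)·√π)`. -/
theorem choose_mul_two_pow_neg_le_gamma (n k : ℕ) (hn : 1 ≤ n) (hk : k ≤ n) :
    (n.choose k : ℝ) * (2 : ℝ)⁻¹ ^ n ≤
      Real.Gamma ((n : ℝ) / 2 + 1 / 2) /
        (Real.Gamma ((n : ℝ) / 2 + 1) * Real.sqrt Real.pi) := by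
  have hdup := Real.Gamma_mul_Gamma_add_half ((n : ℝ) / 2 + 1 / 2)
  have h2s : 2 * ((n : ℝ) / 2 + 1 / 2) = (n : ℝ) + 1 := by ring
  have hpow : (2 : ℝ) ^ (1 - ((n : ℝ) + 1)) = (2 : ℝ)⁻¹ ^ n := by
    rw [show (1 - ((n : ℝ) + 1)) = -(n : ℝ) by ring,
      Real.rpow_neg (by norm_num), Real.rpow_natCast, inv_pow]
  rw [h2s, hpow, show (n : ℝ) / 2 + 1 / 2 + 1 / 2 = (n : ℝ) / 2 + 1 by ring] at hdup
  have hg1 : 0 < Real.Gamma ((n : ℝ) / 2 + 1) := Real.Gamma_pos_of_pos (by positivity)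
  have hsp : 0 < Real.sqrt Real.pi := Real.sqrt_pos.mpr Real.pi_pos
  have hp2 : (0:ℝ) < (2 : ℝ)⁻¹ ^ n := by positivity
  have key : (n.choose k : ℝ) * Real.Gamma ((n : ℝ) / 2 + 1) ^ 2 ≤ Real.Gamma ((n : ℝ) + 1) := by
    have hmid : ((k : ℝ) + 1 + (((n - k : ℕ) : ℝ) + 1)) / 2 = (n : ℝ) / 2 + 1 := by
      rw [Nat.cast_sub hk]; ring
    have h := gamma_sq_mid_le ((k : ℝ) + 1) (((n - k : ℕ) : ℝ) + 1) (by positivity) (by positivity)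
    rw [hmid, Real.Gamma_nat_eq_factorial, Real.Gamma_nat_eq_factorial] at h
    have hfac := Nat.choose_mul_factorial_mul_factorial hk
    calc (n.choose k : ℝ) * Real.Gamma ((n : ℝ) / 2 + 1) ^ 2
        ≤ (n.choose k : ℝ) * ((k.factorial : ℝ) * ((n - k).factorial : ℝ)) :=
          mul_le_mul_of_nonneg_left h (by positivity)
      _ = (n.factorial : ℝ) := by rw [← hfac]; push_cast; ring
      _ = Real.Gamma ((n : ℝ) + 1) := (Real.Gamma_nat_eq_factorial n).symm
  rw [le_div_iff₀ (by positivity), ← mul_le_mul_iff_of_pos_right hg1]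
  nlinarith [mul_le_mul_of_nonneg_right key (mul_pos hp2 hsp).le, hdup]
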